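/- Insertion sort is correct and optimal in adjacent swaps: for any list A of n distinct elements of a linear order, the insertion sort procedure — which, for i ranging from the first index to the last, repeatedly swaps the element at position j with the element at position j−1 (starting from j = i and decrementing j) while j exceeds the first index and A[j] < A[j−1] — terminates with A sorted in ascending order, and the total number of swaps it performs equals the number of inversions of the original list. -/

import Mathlib

variable {α : Type*} [LinearOrder α]

/-- Insert `x` into the (sorted) prefix list by repeatedly swapping it with its left
neighbour while it is smaller, returning the resulting list together with the number of
adjacent swaps performed.  Viewing the prefix from the left: `x` ends up just before the
first element greater than it, and each element it passes costs one swap. -/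
def insertSwap (x : α) : List α → List α × ℕ
  | [] => ([x], 0)
  | a :: t =>
    if x < a then (x :: a :: t, t.length + 1)
    else
      let r := insertSwap x t
      (a :: r.1, r.2)

/-- Insertion sort, counting adjacent swaps: for `i` from the first index to the last,
insert `A[i]` into the already-sorted prefix by adjacent swaps (while `j > low` and
`A[j] < A[j-1]`, swap `A[j]` and `A[j-1]` and decrement `j`).  Returns the sorted list
and the total number of swaps performed. -/
def insertionSortSwap (l : List α) : List α × ℕ :=
  l.foldl (fun acc x => ((insertSwap x acc.1).1, acc.2 + (insertSwap x acc.1).2)) ([], 0)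

/-- The number of inversions of a list: pairs of positions `(i, j)` with `i < j` and
`A[i] > A[j]`. -/
def listInv (l : List α) : ℕ :=
  ((Finset.univ : Finset (Fin l.length × Fin l.length)).filter
    fun p => p.1 < p.2 ∧ l.get p.2 < l.get p.1).card

/-- Recursive inversion count. -/
def inv2 : List α → ℕ
  | [] => 0
  | a :: t => t.countP (fun b => decide (b < a)) + inv2 t

lemma insertSwap_perm (x : α) (s : List α) : (insertSwap x s).1.Perm (x :: s) := by
  induction s with
  | nil => simp [insertSwap]
  | cons a t ih =>
    simp only [insertSwap]
    split
    · exact List.Perm.refl _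
    · exact (ih.cons a).trans (List.Perm.swap x a t)

lemma insertSwap_sorted (x : α) {s : List α} (hs : s.Pairwise (· ≤ ·)) :
    (insertSwap x s).1.Pairwise (· ≤ ·) := by
  induction s with
  | nil => simp [insertSwap]
  | cons a t ih =>
    rw [List.pairwise_cons] at hs
    simp only [insertSwap]
    split
    · rename_i h
      refine List.pairwise_cons.2 ⟨?_, List.pairwise_cons.2 hs⟩
      intro b hb
      rcases List.mem_cons.1 hb with rfl | hb
      · exact le_of_lt h
      · exact (le_of_lt h).trans (hs.1 b hb)
    · rename_i h
      refine List.pairwise_cons.2 ⟨?_, ih hs.2⟩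
      intro b hb
      have : b ∈ x :: t := (insertSwap_perm x t).mem_iff.1 hb
      rcases List.mem_cons.1 this with rfl | hb'
      · exact le_of_not_gt h
      · exact hs.1 b hb'

lemma insertSwap_count (x : α) {s : List α} (hs : s.Pairwise (· ≤ ·)) :
    (insertSwap x s).2 = s.countP (fun a => decide (x < a)) := by
  induction s with
  | nil => simp [insertSwap]
  | cons a t ih =>
    rw [List.pairwise_cons] at hs
    simp only [insertSwap]
    split
    · rename_i h
      have : t.countP (fun a => decide (x < a)) = t.length :=
        List.countP_eq_length.2 fun b hb => decide_eq_true (h.trans_le (hs.1 b hb))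
      simp [List.countP_cons, h, this]
    · rename_i h
      simp [List.countP_cons, h, ih hs.2]

lemma inv2_concat (l : List α) (x : α) :
    inv2 (l ++ [x]) = inv2 l + l.countP (fun a => decide (x < a)) := by
  induction l with
  | nil => simp [inv2]
  | cons a t ih =>
    simp only [List.cons_append, inv2, ih, List.countP_append, List.countP_cons,
      List.countP_nil]
    by_cases h : x < a <;> simp [h] <;> omega

lemma countP_eq_sum (p : α → Prop) [DecidablePred p] (t : List α) :
    t.countP (fun a => decide (p a)) = ∑ j : Fin t.length, if p (t.get j) then 1 else 0 := by
  induction t with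
  | nil => simp
  | cons a t ih =>
    simp only [List.length_cons]
    rw [List.countP_cons, Fin.sum_univ_succ]
    simp only [List.get_cons_zero, List.get_cons_succ, ih]
    by_cases h : p a <;> simp [h] <;> omega

lemma listInv_eq_sum (l : List α) :
    listInv l = ∑ i : Fin l.length, ∑ j : Fin l.length,
      if i < j ∧ l.get j < l.get i then 1 else 0 := by
  rw [listInv, Finset.card_filter, Fintype.sum_prod_type]

lemma listInv_eq_inv2 (l : List α) : listInv l = inv2 l := by
  induction l with
  | nil => simp [listInv]; rfl
  | cons a t ih =>
    rw [listInv_eq_sum]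
    have key : (∑ i : Fin (t.length + 1), ∑ j : Fin (t.length + 1),
        if i < j ∧ (a :: t).get j < (a :: t).get i then 1 else 0)
        = t.countP (fun b => decide (b < a)) + inv2 t := by
      rw [Fin.sum_univ_succ]
      have h0 : (∑ j : Fin (t.length + 1),
          if (0 : Fin (t.length + 1)) < j ∧ (a :: t).get j < (a :: t).get (0 : Fin (t.length + 1)) then 1 else 0)
          = t.countP (fun b => decide (b < a)) := by
        rw [Fin.sum_univ_succ, countP_eq_sum (fun b => b < a) t]
        simp [Fin.succ_pos]
      have h1 : (∑ i : Fin t.length, ∑ j : Fin (t.length + 1),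
          if i.succ < j ∧ (a :: t).get j < (a :: t).get i.succ then 1 else 0) = inv2 t := by
        rw [← ih, listInv_eq_sum]
        refine Finset.sum_congr rfl fun i _ => ?_
        rw [Fin.sum_univ_succ]
        simp [Fin.succ_lt_succ_iff]
      rw [h0, h1]
    exact key.trans rfl

lemma insertionSortSwap_aux (l : List α) :
    (insertionSortSwap l).1.Pairwise (· ≤ ·) ∧ (insertionSortSwap l).1.Perm l ∧
      (insertionSortSwap l).2 = inv2 l := by
  induction l using List.reverseRecOn with
  | nil => exact ⟨List.Pairwise.nil, List.Perm.refl _, rfl⟩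
  | append_singleton l x ih =>
    obtain ⟨hs, hp, hc⟩ := ih
    have h1 : insertionSortSwap (l ++ [x]) =
        ((insertSwap x (insertionSortSwap l).1).1,
         (insertionSortSwap l).2 + (insertSwap x (insertionSortSwap l).1).2) := by
      simp [insertionSortSwap, List.foldl_append]
    rw [h1]
    refine ⟨insertSwap_sorted x hs, ?_, ?_⟩
    · exact (insertSwap_perm x _).trans ((hp.cons x).trans (List.perm_append_singleton x l).symm)
    · rw [insertSwap_count x hs, hp.countP_eq, hc, inv2_concat]

/-- Insertion sort is correct and optimal in adjacent swaps: on a list of distinct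
elements it terminates with the list sorted in ascending order (a permutation of the
original list), and the total number of adjacent swaps it performs equals the number of
inversions of the original list. -/
theorem insertionSortSwap_correct (l : List α) (hl : l.Nodup) :
    (insertionSortSwap l).1.Pairwise (· ≤ ·) ∧
    (insertionSortSwap l).1.Perm l ∧
    (insertionSortSwap l).2 = listInv l := by
  obtain ⟨h1, h2, h3⟩ := insertionSortSwap_aux l
  exact ⟨h1, h2, by rw [h3, listInv_eq_inv2]⟩
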